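/- arXiv:2201.07550 — 3 statements merged into one kernel-verified Lean document; each statement's English description precedes it below -/
import Mathlib

section
/- Let K be an algebraically closed field of characteristic 0 and let G ∈ K[x₀,…,x_m] be homogeneous of degree d ≥ 2 whose first partial derivatives are linearly independent over K. Then hess(G) = det Hess(G) is not the zero polynomial if and only if there exist k₀,…,k_m ∈ K such that, setting L = Σᵢ kᵢ ∂/∂xᵢ, for every operator y = Σᵢ cᵢ ∂/∂xᵢ (cᵢ ∈ K) the vanishing (L^{d−2}·y)(G) = 0 implies y(G) = 0 (i.e., the algebra Q/Ann_Q(G) has the strong Lefschetz property in degree 1). -/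
set_option linter.unusedSectionVars false

open MvPolynomial Finset

namespace HessAux

variable {K : Type*} [Field K] [CharZero K] {m : ℕ}

local notation "R" => MvPolynomial (Fin (m + 1)) K

lemma degree_univ (d : Fin (m + 1) →₀ ℕ) : Finsupp.degree d = ∑ i, d i := by
  rw [Finsupp.degree]
  exact Finset.sum_subset (Finset.subset_univ _)
    (fun i _ hi => Finsupp.notMem_support_iff.mp hi)

lemma sub_single_apply (d : Fin (m + 1) →₀ ℕ) (i j : Fin (m + 1)) :
    ((d - Finsupp.single i 1 : Fin (m + 1) →₀ ℕ)) j = if j = i then d i - 1 else d j := by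
  rw [Finsupp.tsub_apply]
  rcases eq_or_ne j i with rfl | hne
  · simp
  · simp [Finsupp.single_apply, hne, Ne.symm hne]

lemma isHom_pderiv {e : ℕ} {φ : R} (h : φ.IsHomogeneous (e + 1)) (i : Fin (m + 1)) :
    (pderiv i φ).IsHomogeneous e := by
  conv_lhs => rw [φ.as_sum]
  rw [map_sum]
  apply IsHomogeneous.sum
  intro d hd
  rw [pderiv_monomial]
  by_cases h0 : d i = 0
  · simp only [h0, Nat.cast_zero, mul_zero, map_zero]
    exact isHomogeneous_zero _ _ _
  · apply isHomogeneous_monomial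
    have hdeg : Finsupp.degree d = e + 1 := by
      rw [Finsupp.degree_eq_weight_one]
      exact h (mem_support_iff.mp hd)
    rw [degree_univ] at hdeg ⊢
    rw [← Finset.add_sum_erase _ _ (Finset.mem_univ i)] at hdeg
    have key : (d i - 1) + ∑ j ∈ Finset.univ.erase i, d j = e := by omega
    rw [Finset.sum_congr rfl fun j _ => sub_single_apply d i j,
      ← Finset.add_sum_erase _ _ (Finset.mem_univ i), if_pos rfl,
      Finset.sum_congr rfl fun j hj => if_neg (Finset.ne_of_mem_erase hj)]
    exact key

lemma X_mul_pderiv_monomial (d : Fin (m + 1) →₀ ℕ) (a : K) (i : Fin (m + 1)) :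
    X i * pderiv i (monomial d a) = monomial d (a * d i) := by
  rw [pderiv_monomial]
  by_cases h0 : d i = 0
  · simp [h0]
  · have key : Finsupp.single i 1 + (d - Finsupp.single i 1) = d := by
      ext j
      rw [Finsupp.add_apply, sub_single_apply]
      rcases eq_or_ne j i with rfl | hne
      · rw [Finsupp.single_eq_same, if_pos rfl]
        omega
      · simp [Finsupp.single_apply, Ne.symm hne, hne]
    calc X i * monomial (d - Finsupp.single i 1) (a * d i)
        = X i ^ 1 * monomial (d - Finsupp.single i 1) (a * d i) := by rw [pow_one]
      _ = monomial (Finsupp.single i 1 + (d - Finsupp.single i 1)) (a * d i) :=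
          (monomial_single_add).symm
      _ = monomial d (a * d i) := by rw [key]

lemma euler {e : ℕ} {φ : R} (h : φ.IsHomogeneous e) :
    ∑ i, X i * pderiv i φ = (e : K) • φ := by
  conv_lhs => rw [φ.as_sum]
  conv_rhs => rw [φ.as_sum]
  rw [Finset.smul_sum]
  have step : ∀ i : Fin (m + 1), X i * pderiv i (∑ d ∈ φ.support, monomial d (coeff d φ))
      = ∑ d ∈ φ.support, X i * pderiv i (monomial d (coeff d φ)) := by
    intro i
    rw [map_sum, Finset.mul_sum]
  rw [Finset.sum_congr rfl fun i _ => step i, Finset.sum_comm]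
  apply Finset.sum_congr rfl
  intro d hd
  have hdeg : Finsupp.degree d = e := by
    rw [Finsupp.degree_eq_weight_one]
    exact h (mem_support_iff.mp hd)
  calc ∑ i, X i * pderiv i (monomial d (coeff d φ))
      = ∑ i, monomial d (coeff d φ * d i) := by
        exact Finset.sum_congr rfl fun i _ => X_mul_pderiv_monomial _ _ _
    _ = monomial d (coeff d φ * (∑ i, (d i : K))) := by
        rw [Finset.mul_sum, map_sum]
    _ = (e : K) • monomial d (coeff d φ) := by
        rw [smul_monomial, smul_eq_mul, mul_comm]
        congr 1
        rw [← hdeg, degree_univ]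
        push_cast
        rfl

/-- The first-order operator `Σ kᵢ ∂ᵢ` as an endomorphism. -/
noncomputable def Dop (k : Fin (m + 1) → K) : Module.End K R :=
  ∑ i, k i • (pderiv i).toLinearMap

lemma Dop_apply (k : Fin (m + 1) → K) (φ : R) :
    Dop k φ = ∑ i, k i • pderiv i φ := by
  simp [Dop, LinearMap.sum_apply]

lemma isHom_Dop {e : ℕ} {φ : R} (h : φ.IsHomogeneous (e + 1)) (k : Fin (m + 1) → K) :
    (Dop k φ).IsHomogeneous e := by
  rw [Dop_apply]
  apply IsHomogeneous.sum
  intro i _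
  rw [smul_eq_C_mul]
  exact (isHom_pderiv h i).C_mul _

lemma isHom_Dop_pow {e n : ℕ} {φ : R} (h : φ.IsHomogeneous (n + e)) (k : Fin (m + 1) → K) :
    ((Dop k ^ e) φ).IsHomogeneous n := by
  induction e generalizing φ with
  | zero => simpa using h
  | succ e ih =>
      rw [pow_succ, Module.End.mul_apply]
      exact ih (isHom_Dop (by rwa [← Nat.add_assoc] at h) k)

lemma eval_Dop {e : ℕ} {φ : R} (h : φ.IsHomogeneous e) (k : Fin (m + 1) → K) :
    eval k (Dop k φ) = (e : K) * eval k φ := by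
  have key := congrArg (eval k) (euler h)
  simp only [map_sum, map_mul, eval_X, smul_eq_C_mul, eval_C] at key
  rw [Dop_apply, map_sum]
  simp only [smul_eq_C_mul, map_mul, eval_C]
  exact key

lemma Dop_pow_eq_C {e : ℕ} {φ : R} (h : φ.IsHomogeneous e) (k : Fin (m + 1) → K) :
    (Dop k ^ e) φ = C ((e.factorial : K) * eval k φ) := by
  induction e generalizing φ with
  | zero =>
      have h0 : (homogeneousComponent 0) φ = φ := by
        rw [homogeneousComponent_of_mem ((mem_homogeneousSubmodule 0 φ).mpr h), if_pos rfl]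
      have hφ : φ = C (coeff 0 φ) := by
        conv_lhs => rw [← h0, homogeneousComponent_zero]
      have he : eval k φ = coeff 0 φ := by
        conv_lhs => rw [hφ]
        simp
      rw [pow_zero, Nat.factorial_zero, Nat.cast_one, one_mul, he, Module.End.one_apply]
      exact hφ
  | succ e ih =>
      rw [pow_succ, Module.End.mul_apply, ih (isHom_Dop h k), eval_Dop h k]
      congr 1
      push_cast [Nat.factorial_succ]
      ring

lemma pderiv_comm (i j : Fin (m + 1)) (φ : R) :
    pderiv i (pderiv j φ) = pderiv j (pderiv i φ) := by
  induction φ using MvPolynomial.induction_on' with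
  | add p q hp hq => simp [map_add, hp, hq]
  | monomial d a =>
      simp only [pderiv_monomial]
      rcases eq_or_ne i j with rfl | hne
      · rfl
      · rw [sub_single_apply, sub_single_apply, if_neg hne, if_neg (Ne.symm hne),
          tsub_right_comm, mul_right_comm]

lemma pderiv_Dop (i : Fin (m + 1)) (k : Fin (m + 1) → K) (φ : R) :
    pderiv i (Dop k φ) = Dop k (pderiv i φ) := by
  simp only [Dop_apply, map_sum, Derivation.map_smul, LinearMap.map_smul]
  exact Finset.sum_congr rfl fun j _ => by rw [pderiv_comm]

lemma pderiv_Dop_pow (i : Fin (m + 1)) (k : Fin (m + 1) → K) (e : ℕ) (φ : R) :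
    pderiv i ((Dop k ^ e) φ) = (Dop k ^ e) (pderiv i φ) := by
  induction e generalizing φ with
  | zero => simp
  | succ e ih => rw [pow_succ, Module.End.mul_apply, ih, pderiv_Dop, Module.End.mul_apply]

lemma main_iff {d : ℕ} (hd : 2 ≤ d) {G : R} (hG : G.IsHomogeneous d) (k c : Fin (m + 1) → K) :
    ((Dop k ^ (d - 2)) * Dop c) G = 0 ↔
      (Matrix.of fun i j : Fin (m + 1) =>
        eval k (pderiv i (pderiv j G))).mulVec c = 0 := by
  have h1 : G.IsHomogeneous ((d - 1) + 1) := by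
    rwa [Nat.sub_add_cancel (le_trans one_le_two hd)]
  have hy : (Dop c G).IsHomogeneous (d - 1) := isHom_Dop h1 c
  have hy' : (Dop c G).IsHomogeneous (1 + (d - 2)) := by
    rwa [show 1 + (d - 2) = d - 1 by omega]
  have hpy : ∀ i, (pderiv i (Dop c G)).IsHomogeneous (d - 2) := by
    intro i
    have h2 : (Dop c G).IsHomogeneous ((d - 2) + 1) := by
      rwa [show (d - 2) + 1 = d - 1 by omega]
    exact isHom_pderiv h2 i
  have hEG : ((Dop k ^ (d - 2)) * Dop c) G = (Dop k ^ (d - 2)) (Dop c G) := rfl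
  have hpd : ∀ i, pderiv i (((Dop k ^ (d - 2)) * Dop c) G)
      = C (((d - 2).factorial : K) *
          ((Matrix.of fun i j : Fin (m + 1) =>
            eval k (pderiv i (pderiv j G))).mulVec c i)) := by
    intro i
    rw [hEG, pderiv_Dop_pow, Dop_pow_eq_C (hpy i) k]
    congr 2
    have heval : eval k (pderiv i (Dop c G))
        = ∑ j, c j * eval k (pderiv i (pderiv j G)) := by
      rw [Dop_apply, map_sum, map_sum]
      apply Finset.sum_congr rfl
      intro j _
      rw [Derivation.map_smul, smul_eq_C_mul, map_mul, eval_C]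
    have hmv : (Matrix.of fun i j : Fin (m + 1) =>
        eval k (pderiv i (pderiv j G))).mulVec c i
        = ∑ j, eval k (pderiv i (pderiv j G)) * c j := rfl
    rw [heval, hmv]
    exact Finset.sum_congr rfl fun j _ => mul_comm _ _
  constructor
  · intro h0
    funext i
    have h3 := hpd i
    rw [h0, map_zero] at h3
    have h4 : ((d - 2).factorial : K) *
        ((Matrix.of fun i j : Fin (m + 1) =>
          eval k (pderiv i (pderiv j G))).mulVec c i) = 0 := by
      have h6 := congrArg (coeff 0) h3
      rwa [coeff_zero, coeff_C, if_pos rfl, eq_comm] at h6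
    have h5 : ((d - 2).factorial : K) ≠ 0 :=
      Nat.cast_ne_zero.mpr (Nat.factorial_ne_zero _)
    have := mul_eq_zero.mp h4
    simpa [h5] using this
  · intro h0
    have hhom : (((Dop k ^ (d - 2)) * Dop c) G).IsHomogeneous 1 := by
      rw [hEG]
      exact isHom_Dop_pow hy' k
    have hz : ∀ i, pderiv i (((Dop k ^ (d - 2)) * Dop c) G) = 0 := by
      intro i
      rw [hpd i, congrFun h0 i]
      simp
    have heu := euler hhom
    rw [Nat.cast_one, one_smul] at heu
    rw [← heu]
    exact Finset.sum_eq_zero fun i _ => by rw [hz i, mul_zero]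

end HessAux

open HessAux in
/-- **Hessian criterion for strong Lefschetz in degree 1.** For `G` homogeneous of degree
`d ≥ 2` over an algebraically closed field of characteristic `0`, with linearly independent
first partial derivatives, the Hessian determinant of `G` is not identically zero if and
only if there is a first order operator `L = Σ kᵢ ∂ᵢ` such that for every first order
operator `y = Σ cᵢ ∂ᵢ`, `(L^(d-2) · y)(G) = 0` implies `y(G) = 0`
(strong Lefschetz in degree `1` for `Q / Ann_Q(G)`). -/
theorem hessian_ne_zero_iff_slp_degree_one
    {K : Type*} [Field K] [IsAlgClosed K] [CharZero K]
    {m : ℕ} {d : ℕ} (hd : 2 ≤ d)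
    {G : MvPolynomial (Fin (m + 1)) K} (hG : G.IsHomogeneous d)
    (hind : LinearIndependent K (fun i : Fin (m + 1) => MvPolynomial.pderiv i G)) :
    (Matrix.of fun i j : Fin (m + 1) =>
        MvPolynomial.pderiv i (MvPolynomial.pderiv j G)).det ≠ 0 ↔
    ∃ k : Fin (m + 1) → K,
      ∀ c : Fin (m + 1) → K,
        ((((∑ i, k i • (MvPolynomial.pderiv i).toLinearMap :
              Module.End K (MvPolynomial (Fin (m + 1)) K)) ^ (d - 2) *
            (∑ i, c i • (MvPolynomial.pderiv i).toLinearMap) :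
              Module.End K (MvPolynomial (Fin (m + 1)) K)) :
            MvPolynomial (Fin (m + 1)) K →ₗ[K] MvPolynomial (Fin (m + 1)) K) G = 0 →
        ((∑ i, c i • (MvPolynomial.pderiv i).toLinearMap :
            Module.End K (MvPolynomial (Fin (m + 1)) K)) :
            MvPolynomial (Fin (m + 1)) K →ₗ[K] MvPolynomial (Fin (m + 1)) K) G = 0) := by
  classical
  have evalDet : ∀ k : Fin (m + 1) → K,
      eval k (Matrix.of fun i j : Fin (m + 1) => pderiv i (pderiv j G)).det
      = (Matrix.of fun i j : Fin (m + 1) => eval k (pderiv i (pderiv j G))).det := by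
    intro k
    rw [RingHom.map_det]
    rfl
  constructor
  · intro hdet
    have hex : ∃ k : Fin (m + 1) → K,
        eval k (Matrix.of fun i j : Fin (m + 1) => pderiv i (pderiv j G)).det ≠ 0 := by
      by_contra hcon
      push_neg at hcon
      exact hdet (MvPolynomial.funext fun x => by rw [hcon x, map_zero])
    obtain ⟨k, hk⟩ := hex
    refine ⟨k, fun c hc => ?_⟩
    have hc' : (Matrix.of fun i j : Fin (m + 1) =>
        eval k (pderiv i (pderiv j G))).mulVec c = 0 :=
      (main_iff hd hG k c).mp hc
    have hcz : c = 0 := by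
      by_contra hcc
      have h0 : (Matrix.of fun i j : Fin (m + 1) =>
          eval k (pderiv i (pderiv j G))).det = 0 :=
        Matrix.exists_mulVec_eq_zero_iff.mp ⟨c, hcc, hc'⟩
      rw [evalDet k] at hk
      exact hk h0
    show Dop c G = 0
    rw [hcz]
    simp [Dop_apply]
  · rintro ⟨k, hk⟩
    have hA : (Matrix.of fun i j : Fin (m + 1) =>
        eval k (pderiv i (pderiv j G))).det ≠ 0 := by
      intro h0
      obtain ⟨c, hc0, hmv⟩ := Matrix.exists_mulVec_eq_zero_iff.mpr h0
      have hEG : ((Dop k ^ (d - 2)) * Dop c) G = 0 := (main_iff hd hG k c).mpr hmv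
      have hyG : Dop c G = 0 := hk c hEG
      have hcz : ∀ i, c i = 0 := by
        apply Fintype.linearIndependent_iff.mp hind c
        rw [← Dop_apply]
        exact hyG
      exact hc0 (funext hcz)
    intro hMdet
    apply hA
    rw [← evalDet k, hMdet, map_zero]
end

section
/- Let K be a field and let R = ⊕_{i=0}^N R^i be a graded Artinian K-algebra satisfying Poincaré duality with socle in degree N (dim_K R^N = 1 and every multiplication pairing R^i × R^{N−i} → R^N is perfect). Fix e with 1 ≤ e ≤ N−1 and a nonzero α ∈ R^e. Then the quotient R_α = R/(0:α) by the annihilator ideal (0:α) = {r ∈ R : rα = 0} is a graded Artinian Gorenstein algebra with socle in degree N−e; concretely: dim_K (α·R^{N−e}) = 1, and for every 0 ≤ i ≤ N−e and every x ∈ R^i, if x·y·α = 0 for all y ∈ R^{N−e−i}, then x·α = 0. -/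
/-- **Gorenstein quotient lemma.** Let `R = ⊕_{i=0}^N R^i` be a graded Artinian algebra
over a field `K` satisfying Poincaré duality with socle in degree `N`, and let `α ∈ R^e`
be nonzero with `1 ≤ e ≤ N - 1`.  Then `R/(0:α)` is Gorenstein with socle in degree
`N - e`; concretely: `dim_K (α · R^(N-e)) = 1`, and for every `0 ≤ i ≤ N - e` and every
`x ∈ R^i`, if `x·y·α = 0` for all `y ∈ R^(N-e-i)`, then `x·α = 0`. -/
theorem gorenstein_quotient_by_annihilator
    {K : Type*} [Field K] {R : Type*} [CommRing R] [Algebra K R]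
    (𝒜 : ℕ → Submodule K R) [GradedAlgebra 𝒜] (N : ℕ)
    (hfin : ∀ i, FiniteDimensional K (𝒜 i))
    (htop : ∀ i, N < i → 𝒜 i = ⊥)
    (hsoc : Module.finrank K (𝒜 N) = 1)
    (hdual : ∀ i ≤ N, ∀ x ∈ 𝒜 i, x ≠ 0 → ∃ y ∈ 𝒜 (N - i), x * y ≠ 0)
    {e : ℕ} (he1 : 1 ≤ e) (he2 : e + 1 ≤ N)
    {α : R} (hα : α ∈ 𝒜 e) (hα0 : α ≠ 0) :
    Module.finrank K (Submodule.map (LinearMap.mulLeft K α) (𝒜 (N - e))) = 1 ∧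
    ∀ i ≤ N - e, ∀ x ∈ 𝒜 i,
      (∀ y ∈ 𝒜 (N - e - i), x * y * α = 0) → x * α = 0 := by
  constructor
  · -- the image is a nonzero subspace of the 1-dimensional `𝒜 N`
    have hle : Submodule.map (LinearMap.mulLeft K α) (𝒜 (N - e)) ≤ 𝒜 N := by
      rintro _ ⟨y, hy, rfl⟩
      have := SetLike.mul_mem_graded hα hy
      simpa [LinearMap.mulLeft, Nat.add_sub_cancel' (le_of_lt (Nat.lt_of_lt_of_le (Nat.lt_succ_self e) he2))] using this
    haveI : FiniteDimensional K (𝒜 N) := hfin N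
    haveI : FiniteDimensional K (Submodule.map (LinearMap.mulLeft K α) (𝒜 (N - e))) :=
      Submodule.finiteDimensional_of_le hle
    have hne : Submodule.map (LinearMap.mulLeft K α) (𝒜 (N - e)) ≠ ⊥ := by
      obtain ⟨y, hy, hy0⟩ := hdual e (by omega) α hα hα0
      intro hbot
      apply hy0
      have : α * y ∈ Submodule.map (LinearMap.mulLeft K α) (𝒜 (N - e)) :=
        ⟨y, hy, rfl⟩
      rw [hbot] at this
      simpa using this
    have h1 : 1 ≤ Module.finrank K (Submodule.map (LinearMap.mulLeft K α) (𝒜 (N - e))) := by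
      rcases Nat.eq_zero_or_pos (Module.finrank K (Submodule.map (LinearMap.mulLeft K α) (𝒜 (N - e)))) with h | h
      · exact absurd (Submodule.finrank_eq_zero.mp h) hne
      · exact h
    have h2 : Module.finrank K (Submodule.map (LinearMap.mulLeft K α) (𝒜 (N - e))) ≤ 1 := by
      calc Module.finrank K (Submodule.map (LinearMap.mulLeft K α) (𝒜 (N - e)))
          ≤ Module.finrank K (𝒜 N) := Submodule.finrank_mono hle
        _ = 1 := hsoc
    omega
  · intro i hi x hx hxy
    by_contra hxα
    have hxα' : x * α ∈ 𝒜 (i + e) := SetLike.mul_mem_graded hx hα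
    obtain ⟨y, hy, hy0⟩ := hdual (i + e) (by omega) (x * α) hxα' hxα
    have : N - (i + e) = N - e - i := by omega
    rw [this] at hy
    exact hy0 (by rw [show x * α * y = x * y * α by ring]; exact hxy y hy)
end

section
/- Let K be a field of characteristic 0 and let R be a standard Artinian Gorenstein K-algebra with socle in degree N. Let i ≥ 1 and j ≥ 1 be integers with i + j ≤ N − 1, and let x, y ∈ R¹ satisfy x^i y^j = 0. Assume that for every v ∈ R¹ there exists w ∈ R¹ such that i·v·x^{i−1}·y^j + j·w·x^i·y^{j−1} = 0. Then x^{i−1}·y^{j+1} = 0. -/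
/-- **First-order ker–coker deformation step.** Let `R` be a standard Artinian Gorenstein
algebra over a field of characteristic `0` with socle in degree `N`.  Let `i, j ≥ 1` with
`i + j ≤ N - 1` and `x, y ∈ R¹` with `x^i y^j = 0`.  If for every `v ∈ R¹` there is
`w ∈ R¹` with `i·v·x^(i-1)·y^j + j·w·x^i·y^(j-1) = 0`, then `x^(i-1)·y^(j+1) = 0`. -/
theorem ker_coker_first_order_step
    {K : Type*} [Field K] [CharZero K] {R : Type*} [CommRing R] [Algebra K R]
    (𝒜 : ℕ → Submodule K R) [GradedAlgebra 𝒜] (N : ℕ)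
    (hfin : ∀ i, FiniteDimensional K (𝒜 i))
    (htop : ∀ i, N < i → 𝒜 i = ⊥)
    (h0 : Module.finrank K (𝒜 0) = 1)
    (hsoc : Module.finrank K (𝒜 N) = 1)
    (hgen : Algebra.adjoin K (𝒜 1 : Set R) = ⊤)
    (hdual : ∀ i ≤ N, ∀ x ∈ 𝒜 i, x ≠ 0 → ∃ y ∈ 𝒜 (N - i), x * y ≠ 0)
    {i j : ℕ} (hi : 1 ≤ i) (hj : 1 ≤ j) (hij : i + j + 1 ≤ N)
    {x y : R} (hx : x ∈ 𝒜 1) (hy : y ∈ 𝒜 1)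
    (hxy : x ^ i * y ^ j = 0)
    (hdef : ∀ v ∈ 𝒜 1, ∃ w ∈ 𝒜 1,
      i • (v * x ^ (i - 1) * y ^ j) + j • (w * x ^ i * y ^ (j - 1)) = 0) :
    x ^ (i - 1) * y ^ (j + 1) = 0 := by
  set m : R := x ^ (i - 1) * y ^ (j + 1) with hm
  -- Step 1: every degree-1 element kills m.
  have key : ∀ v ∈ 𝒜 1, v * m = 0 := by
    intro v hv
    obtain ⟨w, hw, heq⟩ := hdef v hv
    have h2 : (i : R) * (v * x ^ (i - 1) * y ^ j * y) + (j : R) * (w * x ^ i * y ^ (j - 1) * y) = 0 := by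
      have h := congrArg (· * y) heq
      simp only [nsmul_eq_mul, add_mul, zero_mul] at h
      linear_combination h
    have hzero : w * x ^ i * y ^ (j - 1) * y = 0 := by
      have e : w * x ^ i * y ^ (j - 1) * y = w * (x ^ i * (y ^ (j - 1) * y)) := by ring
      rw [e, ← pow_succ, Nat.sub_add_cancel hj, hxy, mul_zero]
    have e2 : v * x ^ (i - 1) * y ^ j * y = v * m := by
      rw [hm, pow_succ]; ring
    rw [hzero, mul_zero, add_zero, e2] at h2
    have h3 : (i : K) • (v * m) = 0 := by
      rw [Nat.cast_smul_eq_nsmul, nsmul_eq_mul]; exact h2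
    rcases smul_eq_zero.mp h3 with h | h
    · exact absurd h (Nat.cast_ne_zero.mpr (by omega))
    · exact h
  -- Step 2: for every r, m * r is a scalar multiple of m.
  have univ : ∀ r : R, ∃ c : K, m * r = c • m := by
    intro r
    have hr : r ∈ Algebra.adjoin K ((𝒜 1 : Submodule K R) : Set R) := by
      rw [hgen]; trivial
    induction hr using Algebra.adjoin_induction with
    | mem a ha => exact ⟨0, by rw [mul_comm, key a ha, zero_smul]⟩
    | algebraMap c => exact ⟨c, by rw [mul_comm, ← Algebra.smul_def]⟩
    | add a b _ _ ha hb =>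
      obtain ⟨c, hc⟩ := ha; obtain ⟨d, hd⟩ := hb
      exact ⟨c + d, by rw [mul_add, hc, hd, add_smul]⟩
    | mul a b _ _ ha hb =>
      obtain ⟨c, hc⟩ := ha; obtain ⟨d, hd⟩ := hb
      exact ⟨c * d, by rw [← mul_assoc, hc, smul_mul_assoc, hd, smul_smul]⟩
  -- Step 3: conclude by Gorenstein duality and gradedness.
  by_contra hne
  have hmmem : m ∈ 𝒜 (i + j) := by
    have h1 : x ^ (i - 1) ∈ 𝒜 ((i - 1) • 1) := SetLike.pow_mem_graded _ hx
    have h2 : y ^ (j + 1) ∈ 𝒜 ((j + 1) • 1) := SetLike.pow_mem_graded _ hy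
    have := SetLike.mul_mem_graded h1 h2
    have e : (i - 1) • 1 + (j + 1) • 1 = i + j := by simp [smul_eq_mul]; omega
    rwa [e] at this
  obtain ⟨z, hz, hmz⟩ := hdual (i + j) (by omega) m hmmem hne
  obtain ⟨c, hc⟩ := univ z
  have h1 : m * z ∈ 𝒜 (i + j) := hc ▸ Submodule.smul_mem _ c hmmem
  have h2 : m * z ∈ 𝒜 N := by
    have := SetLike.mul_mem_graded hmmem hz
    rwa [Nat.add_sub_cancel' (show i + j ≤ N by omega)] at this
  have hd : i + j ≠ N := by omega
  have e1 : ((DirectSum.decompose 𝒜 (m * z)) (i + j) : R) = m * z :=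
    DirectSum.decompose_of_mem_same 𝒜 h1
  have e2 : ((DirectSum.decompose 𝒜 (m * z)) (i + j) : R) = 0 :=
    DirectSum.decompose_of_mem_ne 𝒜 h2 (Ne.symm hd)
  exact hmz (e1 ▸ e2 ▸ rfl)
end
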